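/- A subset X ⊆ [0,1] is almost full if and only if X is summably measurable with measure 1. -/

import Mathlib

open MeasureTheory Filter Set

noncomputable section

/-- A sequence of functions on `[0,1]` is *regular* if each member is continuous and
nonnegative on `[0,1]` and has integral over `[0,1]` strictly less than `2⁻ⁿ`. -/
def RegularSeq (h : ℕ → ℝ → ℝ) : Prop :=
  ∀ n : ℕ, ContinuousOn (h n) (Set.Icc 0 1) ∧
    (∀ x ∈ Set.Icc (0:ℝ) 1, 0 ≤ h n x) ∧
    (∫ x in (0:ℝ)..1, h n x) < (1/2 : ℝ) ^ n

/-- The set `Ω(𝔥)` of points of `[0,1]` at which the partial sums of `∑ hₙ(x)` are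
bounded above. -/
def Omega (h : ℕ → ℝ → ℝ) : Set ℝ :=
  {x ∈ Set.Icc (0:ℝ) 1 | ∃ γ : ℝ, ∀ m : ℕ, ∑ n ∈ Finset.range (m+1), h n x ≤ γ}

/-- A subset `X ⊆ [0,1]` is *almost full* if `Ω(𝔥) ⊆ X` for some regular sequence `𝔥`. -/
def AlmostFull (X : Set ℝ) : Prop :=
  ∃ h : ℕ → ℝ → ℝ, RegularSeq h ∧ Omega h ⊆ X

/-- `f : D → ℝ` is *summable with integral `I`* if there are an almost full set `Y ⊆ D`
and continuous functions `Fₙ` on `[0,1]` with `∫₀¹ |Fₙ₊₁ - Fₙ| < 2⁻ⁿ`, `Fₙ(x) → f(x)`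
on `Y`, and `∫₀¹ Fₙ → I`. -/
def SummableWithIntegral (D : Set ℝ) (f : ℝ → ℝ) (I : ℝ) : Prop :=
  ∃ (Y : Set ℝ) (F : ℕ → ℝ → ℝ),
    AlmostFull Y ∧ Y ⊆ D ∧
    (∀ n : ℕ, ContinuousOn (F n) (Set.Icc 0 1)) ∧
    (∀ n : ℕ, (∫ x in (0:ℝ)..1, |F (n+1) x - F n x|) < (1/2 : ℝ) ^ n) ∧
    (∀ x ∈ Y, Tendsto (fun n => F n x) atTop (nhds (f x))) ∧
    Tendsto (fun n => ∫ x in (0:ℝ)..1, F n x) atTop (nhds I)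

/-- `X ⊆ [0,1]` is *summably measurable with measure `μ`* if its indicator function is
summable with integral `μ`. -/
def SummablyMeasurable (X : Set ℝ) (μ : ℝ) : Prop :=
  SummableWithIntegral (Set.Icc 0 1) (X.indicator fun _ => (1:ℝ)) μ

lemma myIntegralIcc (f : ℝ → ℝ) :
    ∫ x, f x ∂(volume.restrict (Set.Icc (0:ℝ) 1)) = ∫ x in (0:ℝ)..1, f x := by
  rw [intervalIntegral.integral_of_le zero_le_one]
  exact MeasureTheory.integral_Icc_eq_integral_Ioc

lemma ae_mem_Omega (h : ℕ → ℝ → ℝ) (hreg : RegularSeq h) :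
    ∀ᵐ x ∂(volume.restrict (Set.Icc (0:ℝ) 1)), x ∈ Omega h := by
  set μ := volume.restrict (Set.Icc (0:ℝ) 1) with hμdef
  have haem : ∀ n, AEMeasurable (fun x => ENNReal.ofReal (h n x)) μ := fun n =>
    ENNReal.measurable_ofReal.comp_aemeasurable
      (((hreg n).1.aestronglyMeasurable measurableSet_Icc).aemeasurable)
  have hint : ∀ n, Integrable (h n) μ := fun n => (hreg n).1.integrableOn_Icc
  have hnn : ∀ n, 0 ≤ᵐ[μ] h n := fun n => by
    filter_upwards [ae_restrict_mem measurableSet_Icc] with x hx using (hreg n).2.1 x hx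
  have hlt : ∀ n, ∫⁻ x, ENNReal.ofReal (h n x) ∂μ ≤ ENNReal.ofReal ((1/2:ℝ)^n) := fun n => by
    rw [← ofReal_integral_eq_lintegral_ofReal (hint n) (hnn n)]
    refine ENNReal.ofReal_le_ofReal ?_
    rw [hμdef, myIntegralIcc]
    exact (hreg n).2.2.le
  have hgeo : (∑' n : ℕ, ENNReal.ofReal ((1/2:ℝ)^n)) ≠ ⊤ := by
    have h1 : ∀ n : ℕ, ENNReal.ofReal ((1/2:ℝ)^n) = (ENNReal.ofReal (1/2))^n := fun n =>
      ENNReal.ofReal_pow (by norm_num) n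
    simp_rw [h1, ENNReal.tsum_geometric]
    rw [Ne, ENNReal.inv_eq_top, tsub_eq_zero_iff_le, not_le]
    rw [ENNReal.ofReal_lt_one]; norm_num
  have hfin : ∫⁻ x, ∑' n, ENNReal.ofReal (h n x) ∂μ ≠ ⊤ := by
    rw [lintegral_tsum haem]
    exact ne_top_of_le_ne_top hgeo (ENNReal.tsum_le_tsum hlt)
  filter_upwards [ae_lt_top' (AEMeasurable.ennreal_tsum haem) hfin,
    ae_restrict_mem measurableSet_Icc] with x hx hxI
  refine ⟨hxI, (∑' n, ENNReal.ofReal (h n x)).toReal, fun m => ?_⟩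
  rw [← ENNReal.ofReal_le_iff_le_toReal hx.ne,
    ENNReal.ofReal_sum_of_nonneg (fun i _ => (hreg i).2.1 x hxI)]
  exact ENNReal.sum_le_tsum _

open MeasureTheory Filter Set

lemma geo_Ico (n m : ℕ) : ∑ k ∈ Finset.Ico n m, (1/2:ℝ)^k ≤ 2 * (1/2)^n := by
  rw [Finset.sum_Ico_eq_sum_range]
  simp_rw [pow_add, ← Finset.mul_sum]
  calc (1/2:ℝ)^n * ∑ k ∈ Finset.range (m-n), (1/2:ℝ)^k
      ≤ (1/2:ℝ)^n * 2 := by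
        refine mul_le_mul_of_nonneg_left (sum_geometric_two_le _) (by positivity)
    _ = 2 * (1/2)^n := by ring

lemma fatouB (F : ℕ → ℝ → ℝ) (G : ℝ → ℝ)
    (hFc : ∀ n, ContinuousOn (F n) (Set.Icc 0 1))
    (hd : ∀ n, (∫ x in (0:ℝ)..1, |F (n+1) x - F n x|) < (1/2:ℝ)^n)
    (hae : ∀ᵐ x ∂(volume.restrict (Set.Icc (0:ℝ) 1)),
      Tendsto (fun n => F n x) atTop (nhds (G x))) (n : ℕ) :
    ∫⁻ x, ENNReal.ofReal |G x - F n x| ∂(volume.restrict (Set.Icc (0:ℝ) 1))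
      ≤ ENNReal.ofReal (2 * (1/2:ℝ)^n) := by
  set μ := volume.restrict (Set.Icc (0:ℝ) 1) with hμdef
  have haesm : ∀ m k : ℕ, AEStronglyMeasurable (fun x => |F m x - F k x|) μ := fun m k =>
    (((hFc m).sub (hFc k)).abs).aestronglyMeasurable measurableSet_Icc
  have haem : ∀ m k : ℕ, AEMeasurable (fun x => ENNReal.ofReal |F m x - F k x|) μ := fun m k =>
    ENNReal.measurable_ofReal.comp_aemeasurable (haesm m k).aemeasurable
  have hstep : ∀ m, n ≤ m →
      ∫⁻ x, ENNReal.ofReal |F m x - F n x| ∂μ ≤ ENNReal.ofReal (2 * (1/2:ℝ)^n) := by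
    intro m hm
    have hptw : ∀ x : ℝ, |F m x - F n x| ≤ ∑ k ∈ Finset.Ico n m, |F (k+1) x - F k x| := by
      intro x
      have htel : ∑ k ∈ Finset.Ico n m, (F (k+1) x - F k x) = F m x - F n x := by
        rw [Finset.sum_Ico_eq_sub _ hm, Finset.sum_range_sub (fun k => F k x),
          Finset.sum_range_sub (fun k => F k x)]
        ring
      rw [← htel]
      exact Finset.abs_sum_le_sum_abs _ _
    have hint : ∀ k : ℕ, ∫⁻ x, ENNReal.ofReal |F (k+1) x - F k x| ∂μ
        ≤ ENNReal.ofReal ((1/2:ℝ)^k) := by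
      intro k
      have hik : Integrable (fun x => |F (k+1) x - F k x|) μ :=
        (((hFc (k+1)).sub (hFc k)).abs).integrableOn_Icc
      rw [← ofReal_integral_eq_lintegral_ofReal hik (ae_of_all _ fun x => abs_nonneg _)]
      refine ENNReal.ofReal_le_ofReal ?_
      rw [hμdef, myIntegralIcc]
      exact (hd k).le
    calc ∫⁻ x, ENNReal.ofReal |F m x - F n x| ∂μ
        ≤ ∫⁻ x, ∑ k ∈ Finset.Ico n m, ENNReal.ofReal |F (k+1) x - F k x| ∂μ := by
          refine lintegral_mono fun x => ?_
          rw [← ENNReal.ofReal_sum_of_nonneg (fun i _ => abs_nonneg _)]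
          exact ENNReal.ofReal_le_ofReal (hptw x)
      _ = ∑ k ∈ Finset.Ico n m, ∫⁻ x, ENNReal.ofReal |F (k+1) x - F k x| ∂μ :=
          lintegral_finset_sum' _ (fun k _ => haem (k+1) k)
      _ ≤ ∑ k ∈ Finset.Ico n m, ENNReal.ofReal ((1/2:ℝ)^k) :=
          Finset.sum_le_sum fun k _ => hint k
      _ = ENNReal.ofReal (∑ k ∈ Finset.Ico n m, (1/2:ℝ)^k) :=
          (ENNReal.ofReal_sum_of_nonneg (fun i _ => by positivity)).symm
      _ ≤ ENNReal.ofReal (2 * (1/2:ℝ)^n) := ENNReal.ofReal_le_ofReal (geo_Ico n m)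
  have h3 : ∀ᵐ x ∂μ,
      ENNReal.ofReal |G x - F n x|
        = liminf (fun m => ENNReal.ofReal |F m x - F n x|) atTop := by
    filter_upwards [hae] with x hx
    have ht : Tendsto (fun m => ENNReal.ofReal |F m x - F n x|) atTop
        (nhds (ENNReal.ofReal |G x - F n x|)) :=
      (ENNReal.continuous_ofReal.tendsto _).comp ((hx.sub tendsto_const_nhds).abs)
    exact ht.liminf_eq.symm
  calc ∫⁻ x, ENNReal.ofReal |G x - F n x| ∂μ
      = ∫⁻ x, liminf (fun m => ENNReal.ofReal |F m x - F n x|) atTop ∂μ :=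
        lintegral_congr_ae h3
    _ ≤ liminf (fun m => ∫⁻ x, ENNReal.ofReal |F m x - F n x| ∂μ) atTop :=
        lintegral_liminf_le' (fun m => haem m n)
    _ ≤ ENNReal.ofReal (2 * (1/2:ℝ)^n) :=
        liminf_le_of_frequently_le ((eventually_atTop.2 ⟨n, hstep⟩).frequently)

/-- A subset of `[0,1]` is almost full iff it is summably measurable with measure `1`. -/
theorem stmt14 (X : Set ℝ) (hX : X ⊆ Set.Icc 0 1) :
    AlmostFull X ↔ SummablyMeasurable X 1 := by
  constructor
  · rintro ⟨h, hreg, hsub⟩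
    refine ⟨Omega h, fun _ _ => 1, ⟨h, hreg, subset_rfl⟩, fun x hx => hX (hsub hx),
      fun n => continuousOn_const, fun n => by simpa using pow_pos (by norm_num : (0:ℝ) < 1/2) n,
      fun x hx => ?_, by simpa using (tendsto_const_nhds : Tendsto (fun _ : ℕ => (1:ℝ)) atTop _)⟩
    rw [Set.indicator_of_mem (hsub hx)]
    exact tendsto_const_nhds
  · rintro ⟨Y, F, ⟨h0, h0reg, h0sub⟩, hYD, hFc, hFd, hFlim, hFI⟩
    set μ := volume.restrict (Set.Icc (0:ℝ) 1) with hμdef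
    set G := X.indicator (fun _ => (1:ℝ)) with hGdef
    have hG01 : ∀ x, G x = 0 ∨ G x = 1 := fun x => by
      by_cases hx : x ∈ X
      · exact Or.inr (Set.indicator_of_mem hx _)
      · exact Or.inl (Set.indicator_of_notMem hx _)
    have haeY : ∀ᵐ x ∂μ, x ∈ Y := (ae_mem_Omega h0 h0reg).mono fun x hx => h0sub hx
    have haeG : ∀ᵐ x ∂μ, Tendsto (fun n => F n x) atTop (nhds (G x)) :=
      haeY.mono fun x hx => hFlim x hx
    have hB := fun n => fatouB F G hFc hFd haeG n
    have hFaesm : ∀ n, AEStronglyMeasurable (F n) μ := fun n =>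
      (hFc n).aestronglyMeasurable measurableSet_Icc
    have hGaem : AEMeasurable G μ :=
      aemeasurable_of_tendsto_metrizable_ae' (fun n => (hFaesm n).aemeasurable) haeG
    have hGint : Integrable G μ := by
      refine (integrable_const (1:ℝ)).mono' hGaem.aestronglyMeasurable (ae_of_all _ fun x => ?_)
      rcases hG01 x with hx | hx <;> rw [Real.norm_eq_abs, hx] <;> norm_num
    have hFint : ∀ n, Integrable (F n) μ := fun n => (hFc n).integrableOn_Icc
    have hdist : ∀ n, |∫ x, F n x ∂μ - ∫ x, G x ∂μ| ≤ 2 * (1/2:ℝ)^n := by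
      intro n
      rw [← integral_sub (hFint n) hGint]
      have habs : |∫ x, (F n x - G x) ∂μ| ≤ ∫ x, |F n x - G x| ∂μ := by
        simpa [Real.norm_eq_abs] using norm_integral_le_integral_norm (fun x => F n x - G x) (μ := μ)
      refine habs.trans ?_
      have habs_meas : AEStronglyMeasurable (fun x => |F n x - G x|) μ :=
        ((hFaesm n).sub hGint.1).norm
      rw [integral_eq_lintegral_of_nonneg_ae (ae_of_all _ fun x => abs_nonneg _) habs_meas]
      refine ENNReal.toReal_le_of_le_ofReal (by positivity) ?_
      have : ∀ x, |F n x - G x| = |G x - F n x| := fun x => abs_sub_comm _ _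
      simp_rw [this]
      exact hB n
    have htend : Tendsto (fun n => ∫ x, F n x ∂μ) atTop (nhds (∫ x, G x ∂μ)) := by
      rw [tendsto_iff_norm_sub_tendsto_zero]
      refine squeeze_zero (g := fun n => 2 * (1/2:ℝ)^n) (fun n => norm_nonneg _) (fun n => ?_) ?_
      · rw [Real.norm_eq_abs]; exact hdist n
      · have := (tendsto_pow_atTop_nhds_zero_of_lt_one (by norm_num : (0:ℝ) ≤ 1/2) (by norm_num)).const_mul (2:ℝ)
        simpa using this
    have hGI : ∫ x, G x ∂μ = 1 := by
      refine tendsto_nhds_unique htend ?_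
      have : (fun n => ∫ x, F n x ∂μ) = fun n => ∫ x in (0:ℝ)..1, F n x := by
        funext n; rw [hμdef, myIntegralIcc]
      rw [this]; exact hFI
    have hμuniv : (μ Set.univ).toReal = 1 := by
      rw [hμdef, Measure.restrict_apply_univ, Real.volume_Icc]
      norm_num
    have hone : ∫ x, (1 - G x) ∂μ = 0 := by
      rw [integral_sub (integrable_const 1) hGint, integral_const, measureReal_def, hμuniv, hGI]
      simp
    have hint1G : Integrable (fun x => 1 - G x) μ := (integrable_const 1).sub hGint
    have hnn1G : 0 ≤ᵐ[μ] fun x => 1 - G x := ae_of_all _ fun x => by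
      rcases hG01 x with hx | hx <;> simp [hx]
    have hlint1G : ∫⁻ x, ENNReal.ofReal (1 - G x) ∂μ = 0 := by
      rw [← ofReal_integral_eq_lintegral_ofReal hint1G hnn1G, hone, ENNReal.ofReal_zero]
    set φ : ℕ → ℝ → ℝ := fun n x => max 0 (min 1 (1 - F n x)) with hφdef
    have hφc : ∀ n, ContinuousOn (φ n) (Set.Icc 0 1) := by
      intro n
      have hc : Continuous fun t : ℝ => max 0 (min 1 t) :=
        continuous_const.max (continuous_const.min continuous_id)
      exact hc.comp_continuousOn (continuousOn_const.sub (hFc n))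
    have hφnonneg : ∀ n x, 0 ≤ φ n x := fun n x => le_max_left _ _
    have hφle : ∀ n x, φ n x ≤ |F n x - G x| + (1 - G x) := by
      intro n x
      by_cases hx : x ∈ X
      · rw [hGdef, Set.indicator_of_mem hx]
        simp only [sub_self, add_zero]
        refine max_le (abs_nonneg _) ?_
        calc min 1 (1 - F n x) ≤ 1 - F n x := min_le_right _ _
          _ ≤ |1 - F n x| := le_abs_self _
          _ = |F n x - 1| := abs_sub_comm _ _
      · rw [hGdef, Set.indicator_of_notMem hx]
        refine max_le (by positivity) ?_
        calc min 1 (1 - F n x) ≤ 1 := min_le_left _ _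
          _ ≤ |F n x - 0| + (1 - 0) := by
              have := abs_nonneg (F n x - 0); linarith
    have hφint : ∀ n, (∫ x in (0:ℝ)..1, φ n x) ≤ 2 * (1/2:ℝ)^n := by
      intro n
      rw [← myIntegralIcc]
      rw [integral_eq_lintegral_of_nonneg_ae (ae_of_all _ fun x => hφnonneg n x)
        ((hφc n).aestronglyMeasurable measurableSet_Icc)]
      refine ENNReal.toReal_le_of_le_ofReal (by positivity) ?_
      have habs_meas2 : AEStronglyMeasurable (fun x => |F n x - G x|) μ :=
        ((hFaesm n).sub hGint.1).norm
      have haem1 : AEMeasurable (fun x => ENNReal.ofReal |F n x - G x|) μ :=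
        ENNReal.measurable_ofReal.comp_aemeasurable habs_meas2.aemeasurable
      calc ∫⁻ x, ENNReal.ofReal (φ n x) ∂μ
          ≤ ∫⁻ x, (ENNReal.ofReal |F n x - G x| + ENNReal.ofReal (1 - G x)) ∂μ := by
            refine lintegral_mono fun x => ?_
            exact (ENNReal.ofReal_le_ofReal (hφle n x)).trans ENNReal.ofReal_add_le
        _ = (∫⁻ x, ENNReal.ofReal |F n x - G x| ∂μ) + ∫⁻ x, ENNReal.ofReal (1 - G x) ∂μ :=
            lintegral_add_left' haem1 _
        _ ≤ ENNReal.ofReal (2 * (1/2:ℝ)^n) + 0 := by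
            refine add_le_add ?_ (le_of_eq hlint1G)
            have : ∀ x, |F n x - G x| = |G x - F n x| := fun x => abs_sub_comm _ _
            simp_rw [this]
            exact hB n
        _ = ENNReal.ofReal (2 * (1/2:ℝ)^n) := add_zero _
    -- the regular sequence witnessing almost fullness of X
    refine ⟨fun n x => h0 (n+2) x + φ (n+3) x, fun n => ?_, ?_⟩
    · refine ⟨(h0reg (n+2)).1.add (hφc (n+3)),
        fun x hx => add_nonneg ((h0reg (n+2)).2.1 x hx) (hφnonneg _ _), ?_⟩
      have hicc : Set.uIcc (0:ℝ) 1 = Set.Icc 0 1 := Set.uIcc_of_le zero_le_one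
      have hInt1 : IntervalIntegrable (h0 (n+2)) volume 0 1 :=
        ((h0reg (n+2)).1.mono (by rw [hicc])).intervalIntegrable
      have hInt2 : IntervalIntegrable (φ (n+3)) volume 0 1 :=
        ((hφc (n+3)).mono (by rw [hicc])).intervalIntegrable
      rw [intervalIntegral.integral_add hInt1 hInt2]
      have h1 := (h0reg (n+2)).2.2
      have h2 := hφint (n+3)
      have h3 : (0:ℝ) < (1/2)^n := by positivity
      calc (∫ x in (0:ℝ)..1, h0 (n+2) x) + ∫ x in (0:ℝ)..1, φ (n+3) x
          < (1/2:ℝ)^(n+2) + 2 * (1/2)^(n+3) := add_lt_add_of_lt_of_le h1 h2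
        _ ≤ (1/2)^n := by ring_nf; nlinarith [h3]
    · intro x hx
      obtain ⟨hxI, γ, hγ⟩ := hx
      have hxY : x ∈ Y := by
        apply h0sub
        refine ⟨hxI, γ + h0 0 x + h0 1 x, fun m => ?_⟩
        have key : ∑ n ∈ Finset.range (m+1), h0 n x ≤ ∑ n ∈ Finset.range (m+3), h0 n x := by
          refine Finset.sum_le_sum_of_subset_of_nonneg ?_ fun i _ _ => (h0reg i).2.1 x hxI
          exact Finset.range_subset_range.2 (by omega)
        have key2 : ∑ n ∈ Finset.range (m+3), h0 n x
            = h0 0 x + h0 1 x + ∑ n ∈ Finset.range (m+1), h0 (n+2) x := by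
          rw [Finset.sum_range_succ' _ (m+2), Finset.sum_range_succ' (fun i => h0 (i+1) x) (m+1)]
          ring
        have key3 : ∑ n ∈ Finset.range (m+1), h0 (n+2) x
            ≤ ∑ n ∈ Finset.range (m+1), (h0 (n+2) x + φ (n+3) x) :=
          Finset.sum_le_sum fun i _ => le_add_of_nonneg_right (hφnonneg _ _)
        have := hγ m
        linarith
      by_contra hxX
      have hlim : Tendsto (fun n => F n x) atTop (nhds 0) := by
        have h1 := hFlim x hxY
        have hGx : G x = 0 := Set.indicator_of_notMem hxX _
        rwa [hGx] at h1
      have hφlim : Tendsto (fun n => φ n x) atTop (nhds 1) := by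
        have h1 : Tendsto (fun n => 1 - F n x) atTop (nhds 1) := by
          simpa using tendsto_const_nhds.sub hlim
        have h2 : Tendsto (fun n => min 1 (1 - F n x)) atTop (nhds (min 1 1)) :=
          tendsto_const_nhds.min h1
        have h3 : Tendsto (fun n => max 0 (min 1 (1 - F n x))) atTop
            (nhds (max 0 (min 1 1))) := tendsto_const_nhds.max h2
        simpa using h3
      have hev : ∀ᶠ n in atTop, (1/2:ℝ) ≤ φ n x :=
        hφlim.eventually (eventually_ge_nhds (by norm_num : (1/2:ℝ) < 1))
      obtain ⟨N, hN⟩ := eventually_atTop.mp hev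
      obtain ⟨K, hK⟩ := exists_nat_gt (2 * (γ + 1))
      set m := N + K with hmdef
      have hsub1 : Finset.Ico N (m+1) ⊆ Finset.range (m+1) := by
        intro i hi
        exact Finset.mem_range.2 (Finset.mem_Ico.1 hi).2
      have hterm : ∀ i ∈ Finset.Ico N (m+1), (1/2:ℝ) ≤ h0 (i+2) x + φ (i+3) x := by
        intro i hi
        have hiN : N ≤ i := (Finset.mem_Ico.1 hi).1
        have := hN (i+3) (by omega)
        have h0nn := (h0reg (i+2)).2.1 x hxI
        linarith
      have hcard : (Finset.Ico N (m+1)).card = K + 1 := by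
        rw [Nat.card_Ico]; omega
      have hsum : γ < ∑ n ∈ Finset.range (m+1), (h0 (n+2) x + φ (n+3) x) := by
        have hle1 : ((K:ℝ) + 1) * (1/2) ≤ ∑ i ∈ Finset.Ico N (m+1), (h0 (i+2) x + φ (i+3) x) := by
          have := Finset.card_nsmul_le_sum (Finset.Ico N (m+1))
            (fun i => h0 (i+2) x + φ (i+3) x) (1/2:ℝ) hterm
          rw [hcard] at this
          simpa [nsmul_eq_mul, add_comm] using this
        have hle2 : ∑ i ∈ Finset.Ico N (m+1), (h0 (i+2) x + φ (i+3) x)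
            ≤ ∑ n ∈ Finset.range (m+1), (h0 (n+2) x + φ (n+3) x) := by
          refine Finset.sum_le_sum_of_subset_of_nonneg hsub1 fun i _ _ =>
            add_nonneg ((h0reg (i+2)).2.1 x hxI) (hφnonneg _ _)
        have : γ + 1 < ((K:ℝ) + 1) * (1/2) := by
          push_cast at hK ⊢
          linarith
        linarith
      exact absurd (hγ m) (not_le.2 hsum)
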